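/- Let g be a nilpotent Lie algebra over a field and let x₁,…,x_d ∈ g. Then the linear endomorphism Δ_X : g → g, Δ_X(a) = ∑_{j=1}^d [[a, x_j], x_j], is nilpotent. Consequently, if Δ_X(x) = μ·x for some nonzero x ∈ g and scalar μ, then μ = 0; i.e., every DMSA (g, X) with g nilpotent has Spec(A) = {0}. -/

import Mathlib

open scoped BigOperators

/-- For a nilpotent Lie algebra `g` and `x₁, …, x_d ∈ g`, the operator
`Δ_X(a) = ∑_j [[a, x_j], x_j]` is nilpotent; consequently any eigenvalue of `Δ_X`
on a nonzero vector is `0`, i.e. every DMSA on a nilpotent Lie algebra has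
`Spec(A) = {0}`. -/
theorem nilpotent_lie_algebra_deltaX_nilpotent (K : Type*) [Field K]
    (L : Type*) [LieRing L] [LieAlgebra K L] [LieRing.IsNilpotent L]
    (d : ℕ) (x : Fin d → L) :
    (∃ k : ℕ, ∀ a : L, (fun a : L => ∑ j, ⁅⁅a, x j⁆, x j⁆)^[k] a = 0) ∧
      (∀ (y : L) (μ : K), y ≠ 0 → ∑ j, ⁅⁅y, x j⁆, x j⁆ = μ • y → μ = 0) := by
  set f : L → L := fun a : L => ∑ j, ⁅⁅a, x j⁆, x j⁆ with hf
  obtain ⟨k, hk⟩ := LieModule.IsNilpotent.nilpotent K L L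
  have key : ∀ n (a : L), f^[n] a ∈ LieModule.lowerCentralSeries K L L n := by
    intro n
    induction n with
    | zero => intro a; simp [LieModule.lowerCentralSeries]
    | succ n ih =>
      intro a
      rw [Function.iterate_succ_apply']
      set N := LieModule.lowerCentralSeries K L L n
      have hb : f^[n] a ∈ N := ih a
      apply Submodule.sum_mem
      intro j _
      have h1 : ⁅f^[n] a, x j⁆ ∈ LieModule.lowerCentralSeries K L L (n + 1) := by
        rw [LieModule.lowerCentralSeries_succ]
        have := LieSubmodule.lie_mem_lie (I := (⊤ : LieIdeal K L))
          (N := N) (LieSubmodule.mem_top _) hb (x := x j)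
        have h2 : ⁅f^[n] a, x j⁆ = -⁅x j, f^[n] a⁆ := by rw [lie_skew]
        rw [h2]
        exact neg_mem this
      have := (LieModule.lowerCentralSeries K L L (n + 1)).lie_mem h1 (x := x j)
      have h3 : ⁅⁅f^[n] a, x j⁆, x j⁆ = -⁅x j, ⁅f^[n] a, x j⁆⁆ := by rw [lie_skew]
      rw [h3]
      exact neg_mem this
  have hnil : ∀ a : L, f^[k] a = 0 := by
    intro a
    have := key k a
    rw [hk] at this
    simpa using this
  refine ⟨⟨k, hnil⟩, ?_⟩
  intro y μ hy hμ
  have hiter : ∀ n : ℕ, f^[n] y = μ ^ n • y := by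
    intro n
    induction n with
    | zero => simp
    | succ n ih =>
      rw [Function.iterate_succ_apply', ih, hf]
      simp only [smul_lie, lie_smul, ← Finset.smul_sum]
      rw [hμ, smul_smul, pow_succ, mul_comm]
  have h0 : μ ^ k • y = 0 := by rw [← hiter, hnil]
  rcases smul_eq_zero.mp h0 with h | h
  · exact (pow_eq_zero_iff'.mp h).1
  · exact absurd h hy
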